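/- arXiv:1401.6037 — 2 statements merged into one kernel-verified Lean document; each statement's English description precedes it below -/
import Mathlib

section
/- In the nilcoxeter algebra N_n, any product u_{i_1} u_{i_2} ⋯ u_{i_k} of k generators with k > n(n-1)/2 equals zero. -/
/-- The defining relations of the nilcoxeter algebra `N_n`: the generators
`u_1, ..., u_{n-1}` (indexed here by `Fin (n-1)`) square to zero, distant generators
commute, and adjacent generators satisfy the braid relation. -/
inductive NilCoxeterRel (F : Type) [Field F] (n : ℕ) :
    FreeAlgebra F (Fin (n - 1)) → FreeAlgebra F (Fin (n - 1)) → Prop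
  | sq (i : Fin (n - 1)) :
      NilCoxeterRel F n (FreeAlgebra.ι F i * FreeAlgebra.ι F i) 0
  | comm (i j : Fin (n - 1)) (h : (i : ℕ) + 1 < j ∨ (j : ℕ) + 1 < i) :
      NilCoxeterRel F n (FreeAlgebra.ι F i * FreeAlgebra.ι F j)
        (FreeAlgebra.ι F j * FreeAlgebra.ι F i)
  | braid (i j : Fin (n - 1)) (h : (j : ℕ) = (i : ℕ) + 1) :
      NilCoxeterRel F n (FreeAlgebra.ι F i * FreeAlgebra.ι F j * FreeAlgebra.ι F i)
        (FreeAlgebra.ι F j * FreeAlgebra.ι F i * FreeAlgebra.ι F j)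

/-- The nilcoxeter algebra `N_n` over the field `F`. -/
abbrev NilCoxeter (F : Type) [Field F] (n : ℕ) := RingQuot (NilCoxeterRel F n)

/-- The generators `u_i` of the nilcoxeter algebra. -/
noncomputable def NilCoxeter.u (F : Type) [Field F] (n : ℕ) (i : Fin (n - 1)) :
    NilCoxeter F n :=
  RingQuot.mkAlgHom F (NilCoxeterRel F n) (FreeAlgebra.ι F i)


namespace NCX

variable {n : ℕ}

/-- The simple transposition `s_i`. -/
def sw (n : ℕ) (i : Fin (n-1)) : Equiv.Perm (Fin n) :=
  Equiv.swap ⟨i, by omega⟩ ⟨i+1, by omega⟩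

/-- Number of inversions of a permutation. -/
def len (w : Equiv.Perm (Fin n)) : ℕ :=
  (Finset.univ.filter fun p : Fin n × Fin n => p.1 < p.2 ∧ w p.2 < w p.1).card

lemma swap_lt {a b x y : Fin n} (hab : (a:ℕ)+1 = b) (hxy : x < y)
    (h : ¬(x = a ∧ y = b)) : Equiv.swap a b x < Equiv.swap a b y := by
  rw [Equiv.swap_apply_def, Equiv.swap_apply_def]
  split_ifs <;> (simp only [Fin.ext_iff, Fin.lt_def, not_and] at *) <;> omega

lemma swap_lt_iff {a b x y : Fin n} (hab : (a:ℕ)+1 = b) (hxy : x ≠ y)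
    (h1 : ¬(x = a ∧ y = b)) (h2 : ¬(y = a ∧ x = b)) :
    (Equiv.swap a b x < Equiv.swap a b y ↔ x < y) := by
  constructor
  · intro hs
    rcases lt_or_gt_of_ne hxy with h | h
    · exact h
    · exact absurd (swap_lt hab h h2) (lt_asymm hs)
  · exact fun h => swap_lt hab h h1

lemma len_mul_swap_succ {a b : Fin n} (hab : (a:ℕ)+1 = b) {w : Equiv.Perm (Fin n)}
    (hd : w⁻¹ a < w⁻¹ b) : len (Equiv.swap a b * w) = len w + 1 := by
  classical
  have hwa : w (w⁻¹ a) = a := w.apply_symm_apply a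
  have hwb : w (w⁻¹ b) = b := w.apply_symm_apply b
  have key : (Finset.univ.filter fun p : Fin n × Fin n =>
      p.1 < p.2 ∧ (Equiv.swap a b * w) p.2 < (Equiv.swap a b * w) p.1)
      = insert (w⁻¹ a, w⁻¹ b) (Finset.univ.filter fun p : Fin n × Fin n =>
        p.1 < p.2 ∧ w p.2 < w p.1) := by
    ext ⟨c, d⟩
    rw [Finset.mem_filter]
    simp only [Finset.mem_insert, Finset.mem_filter, Finset.mem_univ, true_and,
      Equiv.Perm.mul_apply, Prod.mk.injEq]
    constructor
    · rintro ⟨hcd, hlt⟩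
      by_cases hqq : c = w⁻¹ a ∧ d = w⁻¹ b
      · exact Or.inl hqq
      · refine Or.inr ⟨hcd, ?_⟩
        rw [swap_lt_iff hab ?_ ?_ ?_] at hlt
        · exact hlt
        · intro he; exact absurd (w.injective he) (ne_of_gt hcd)
        · rintro ⟨hh1, hh2⟩
          have hdd : d = w⁻¹ a := by rw [← hh1]; simp
          have hc : c = w⁻¹ b := by rw [← hh2]; simp
          rw [hc, hdd] at hcd
          exact absurd hd (lt_asymm hcd)
        · rintro ⟨hh1, hh2⟩
          exact hqq ⟨by rw [← hh1]; simp, by rw [← hh2]; simp⟩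
    · rintro (⟨hc, hdd⟩ | ⟨hcd, hlt⟩)
      · subst hc; subst hdd
        refine ⟨hd, ?_⟩
        rw [hwa, hwb, Equiv.swap_apply_left, Equiv.swap_apply_right]
        rw [Fin.lt_def]; omega
      · refine ⟨hcd, swap_lt hab hlt ?_⟩
        rintro ⟨hh1, hh2⟩
        have hdd : d = w⁻¹ a := by rw [← hh1]; simp
        have hc : c = w⁻¹ b := by rw [← hh2]; simp
        rw [hc, hdd] at hcd
        exact absurd hd (lt_asymm hcd)
  rw [len, key, Finset.card_insert_of_notMem, len]
  simp only [Finset.mem_filter, Finset.mem_univ, true_and, hwa, hwb, not_and]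
  intro _
  rw [Fin.lt_def] at *; omega

lemma len_mul_swap_pred {a b : Fin n} (hab : (a:ℕ)+1 = b) {w : Equiv.Perm (Fin n)}
    (hd : w⁻¹ b < w⁻¹ a) : len (Equiv.swap a b * w) + 1 = len w := by
  have h2 : (Equiv.swap a b * w)⁻¹ a < (Equiv.swap a b * w)⁻¹ b := by
    simp only [mul_inv_rev, Equiv.Perm.mul_apply]
    rw [Equiv.swap_inv, Equiv.swap_apply_left, Equiv.swap_apply_right]
    exact hd
  have := len_mul_swap_succ hab h2
  rw [← mul_assoc, Equiv.swap_mul_self, one_mul] at this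
  omega

lemma len_le (w : Equiv.Perm (Fin n)) : len w ≤ n * (n - 1) / 2 := by
  classical
  have h1 : len w ≤ (Finset.univ.filter fun p : Fin n × Fin n => p.1 < p.2).card := by
    apply Finset.card_le_card
    intro p hp
    simp only [Finset.mem_filter, Finset.mem_univ, true_and] at *
    exact hp.1
  refine h1.trans ?_
  have h2 : (Finset.univ.filter fun p : Fin n × Fin n => p.1 < p.2).card
      = ∑ j : Fin n, (j : ℕ) := by
    rw [Finset.card_eq_sum_card_fiberwise
      (f := Prod.snd) (t := Finset.univ) (fun p _ => Finset.mem_univ _)]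
    refine Finset.sum_congr rfl fun j _ => ?_
    rw [Finset.filter_filter]
    have hset : (Finset.univ.filter fun p : Fin n × Fin n => p.1 < p.2 ∧ p.2 = j)
        = (Finset.Iio j).map ⟨fun i => (i, j), fun a b h => by
            simpa using congrArg Prod.fst h⟩ := by
      ext ⟨c, d⟩
      simp only [Finset.mem_filter, Finset.mem_univ, true_and, Finset.mem_map,
        Finset.mem_Iio, Function.Embedding.coeFn_mk, Prod.mk.injEq]
      show c < d ∧ d = j ↔ ∃ a < j, (a, j) = (c, d)
      simp only [Prod.mk.injEq]
      constructor
      · rintro ⟨h1, rfl⟩; exact ⟨c, h1, rfl, rfl⟩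
      · rintro ⟨i, hi, rfl, rfl⟩; exact ⟨hi, rfl⟩
    rw [hset, Finset.card_map, Fin.card_Iio]
  rw [h2, show (∑ j : Fin n, (j:ℕ)) = ∑ i ∈ Finset.range n, i from
    Fin.sum_univ_eq_sum_range (fun i => i) n, Finset.sum_range_id]

/-- `s_i` is a left descent of `w`. -/
def Des (i : Fin (n-1)) (w : Equiv.Perm (Fin n)) : Prop :=
  w⁻¹ ⟨(i:ℕ)+1, by omega⟩ < w⁻¹ ⟨i, by omega⟩

lemma len_sw_of_des {i : Fin (n-1)} {w : Equiv.Perm (Fin n)} (h : Des i w) :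
    len (sw n i * w) + 1 = len w :=
  len_mul_swap_pred rfl h

lemma len_sw_of_not_des {i : Fin (n-1)} {w : Equiv.Perm (Fin n)} (h : ¬ Des i w) :
    len (sw n i * w) = len w + 1 := by
  apply len_mul_swap_succ rfl
  rcases lt_trichotomy (w⁻¹ ⟨i, by omega⟩) (w⁻¹ ⟨(i:ℕ)+1, by omega⟩) with hh | hh | hh
  · exact hh
  · exact absurd (w⁻¹.injective hh) (by simp [Fin.ext_iff])
  · exact absurd hh h

lemma sw_inv (j : Fin (n-1)) : (sw n j)⁻¹ = sw n j := by
  simp [sw]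

lemma inv_mul_sw_apply (j : Fin (n-1)) (w : Equiv.Perm (Fin n)) (x : Fin n) :
    (sw n j * w)⁻¹ x = w⁻¹ (sw n j x) := by
  rw [mul_inv_rev, Equiv.Perm.mul_apply, sw_inv]

lemma sw_val (j : Fin (n-1)) (x : Fin n) :
    ((sw n j x : Fin n) : ℕ) = if (x:ℕ) = (j:ℕ) then (j:ℕ)+1
      else if (x:ℕ) = (j:ℕ)+1 then (j:ℕ) else (x:ℕ) := by
  rw [sw, Equiv.swap_apply_def]
  split_ifs <;> (simp only [Fin.ext_iff] at *) <;> omega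

lemma sw_mk (j : Fin (n-1)) (x : ℕ) (hx : x < n) (y : ℕ) (hy : y < n)
    (h : y = if x = (j:ℕ) then (j:ℕ)+1 else if x = (j:ℕ)+1 then (j:ℕ) else x) :
    sw n j ⟨x, hx⟩ = ⟨y, hy⟩ := by
  rw [Fin.ext_iff, sw_val]
  simpa using h.symm

lemma sw_mul_self (i : Fin (n-1)) : sw n i * sw n i = 1 := by
  rw [sw, Equiv.swap_mul_self]

lemma sw_comm {i j : Fin (n-1)} (h : (i:ℕ)+1 < j ∨ (j:ℕ)+1 < i) :
    sw n i * sw n j = sw n j * sw n i := by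
  ext x
  simp only [Equiv.Perm.mul_apply]
  rw [sw_val, sw_val, sw_val, sw_val]
  split_ifs <;> omega

set_option maxHeartbeats 2000000 in
lemma sw_braid {i j : Fin (n-1)} (h : (j:ℕ) = (i:ℕ)+1) :
    sw n i * sw n j * sw n i = sw n j * sw n i * sw n j := by
  ext x
  simp only [Equiv.Perm.mul_apply]
  rw [sw_val, sw_val, sw_val, sw_val, sw_val, sw_val]
  split_ifs <;> omega

end NCX

namespace NCX

variable {n : ℕ}

noncomputable def P (F : Type) [Field F] (n : ℕ) (l : List (Fin (n-1))) : NilCoxeter F n :=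
  (l.map (NilCoxeter.u F n)).prod

def pi (n : ℕ) (l : List (Fin (n-1))) : Equiv.Perm (Fin n) :=
  (l.map (sw n)).prod

@[simp] lemma pi_nil : pi n [] = 1 := rfl
@[simp] lemma pi_cons (j : Fin (n-1)) (t : List (Fin (n-1))) :
    pi n (j :: t) = sw n j * pi n t := by simp [pi]

variable {F : Type} [Field F]

@[simp] lemma P_nil : P F n [] = 1 := rfl
@[simp] lemma P_cons (j : Fin (n-1)) (t : List (Fin (n-1))) :
    P F n (j :: t) = NilCoxeter.u F n j * P F n t := by simp [P]

lemma u_sq (i : Fin (n-1)) : NilCoxeter.u F n i * NilCoxeter.u F n i = 0 := by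
  rw [NilCoxeter.u, ← map_mul,
    RingQuot.mkAlgHom_rel F (NilCoxeterRel.sq i), map_zero]

lemma u_comm {i j : Fin (n-1)} (h : (i:ℕ) + 1 < j ∨ (j:ℕ) + 1 < i) :
    NilCoxeter.u F n i * NilCoxeter.u F n j
      = NilCoxeter.u F n j * NilCoxeter.u F n i := by
  rw [NilCoxeter.u, NilCoxeter.u, ← map_mul, ← map_mul,
    RingQuot.mkAlgHom_rel F (NilCoxeterRel.comm i j h)]

lemma u_braid {i j : Fin (n-1)} (h : (j:ℕ) = (i:ℕ) + 1) :
    NilCoxeter.u F n i * NilCoxeter.u F n j * NilCoxeter.u F n i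
      = NilCoxeter.u F n j * NilCoxeter.u F n i * NilCoxeter.u F n j := by
  rw [NilCoxeter.u, NilCoxeter.u, ← map_mul, ← map_mul, ← map_mul, ← map_mul,
    RingQuot.mkAlgHom_rel F (NilCoxeterRel.braid i j h)]

lemma len_one : len (1 : Equiv.Perm (Fin n)) = 0 := by
  rw [len, Finset.card_eq_zero, Finset.filter_eq_empty_iff]
  rintro ⟨c, d⟩ _
  simp only [Equiv.Perm.one_apply, Equiv.Perm.coe_one, id_eq, not_and]
  exact fun h1 h2 => absurd h2 (lt_asymm h1)

lemma len_pi_le (l : List (Fin (n-1))) : len (pi n l) ≤ l.length := by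
  induction l with
  | nil => simp [len_one]
  | cons j t ih =>
    rw [pi_cons, List.length_cons]
    by_cases hD : Des j (pi n t)
    · have := len_sw_of_des hD; omega
    · have := len_sw_of_not_des hD; omega

lemma des_one (i : Fin (n-1)) : ¬ Des i (1 : Equiv.Perm (Fin n)) := by
  unfold Des
  simp only [inv_one, Equiv.Perm.one_apply, Equiv.Perm.coe_one, id_eq]
  rw [Fin.lt_def]
  simp only [not_lt]
  omega

lemma inv_sw_val (j : Fin (n-1)) (w : Equiv.Perm (Fin n)) (x : ℕ) (hx : x < n)
    (y : ℕ) (hy : y < n)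
    (h : y = if x = (j:ℕ) then (j:ℕ)+1 else if x = (j:ℕ)+1 then (j:ℕ) else x) :
    (sw n j * w)⁻¹ ⟨x, hx⟩ = w⁻¹ ⟨y, hy⟩ := by
  rw [inv_mul_sw_apply, sw_mk j x hx y hy h]

lemma inv_val_congr (w : Equiv.Perm (Fin n)) {x y : ℕ} (hx : x < n) (hy : y < n)
    (h : x = y) : ((w⁻¹ ⟨x, hx⟩ : Fin n) : ℕ) = ((w⁻¹ ⟨y, hy⟩ : Fin n) : ℕ) := by
  subst h; rfl

lemma inv_val_ne (w : Equiv.Perm (Fin n)) {x y : ℕ} (hx : x < n) (hy : y < n)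
    (h : x ≠ y) : ((w⁻¹ ⟨x, hx⟩ : Fin n) : ℕ) ≠ ((w⁻¹ ⟨y, hy⟩ : Fin n) : ℕ) := by
  intro he
  exact h (by simpa [Fin.ext_iff] using w⁻¹.injective (Fin.ext he))

end NCX

namespace NCX

variable {n : ℕ}

set_option maxHeartbeats 4000000 in
lemma lemB (F : Type) [Field F] (n : ℕ) :
    ∀ (N : ℕ) (t : List (Fin (n-1))), t.length ≤ N →
    len (pi n t) = t.length → ∀ i : Fin (n-1), Des i (pi n t) →
    ∃ m : List (Fin (n-1)), m.length + 1 = t.length ∧ pi n m = sw n i * pi n t ∧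
      len (pi n m) = m.length ∧ P F n t = NilCoxeter.u F n i * P F n m := by
  intro N
  induction N with
  | zero =>
    intro t ht hred i hD
    have hnil : t = [] := List.length_eq_zero_iff.mp (Nat.le_zero.mp ht)
    subst hnil
    rw [pi_nil] at hD
    exact absurd hD (des_one i)
  | succ N IH =>
    intro t ht hred i hD
    match t with
    | [] => rw [pi_nil] at hD; exact absurd hD (des_one i)
    | j :: t' =>
      have hlen' : t'.length ≤ N := by simpa using ht
      have hred0 : len (pi n (j :: t')) = t'.length + 1 := by simpa using hred
      have hredc : len (sw n j * pi n t') = t'.length + 1 := by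
        rw [← pi_cons]; exact hred0
      have hle := len_pi_le (n := n) t'
      have hNDj : ¬ Des j (pi n t') := by
        intro hDj
        have h1 := len_sw_of_des hDj
        omega
      have hred' : len (pi n t') = t'.length := by
        have := len_sw_of_not_des hNDj
        omega
      have hDc : Des i (sw n j * pi n t') := by rwa [pi_cons] at hD
      by_cases hij : (i:ℕ) = (j:ℕ)
      · -- i = j
        have hIJ : i = j := Fin.ext hij
        subst hIJ
        refine ⟨t', by simp, ?_, hred', by simp⟩
        rw [pi_cons, ← mul_assoc, sw_mul_self, one_mul]
      · by_cases hj1 : (j:ℕ) = (i:ℕ)+1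
        · -- adjacent, j = i + 1
          have hD2 : ((pi n t')⁻¹ ⟨(i:ℕ)+2, by omega⟩ : Fin n)
              < (pi n t')⁻¹ ⟨(i:ℕ), by omega⟩ := by
            unfold Des at hDc
            rwa [inv_sw_val j _ ((i:ℕ)+1) (by omega) ((i:ℕ)+2) (by omega)
                (by rw [if_pos (by omega)] <;> omega),
              inv_sw_val j _ (i:ℕ) (by omega) (i:ℕ) (by omega)
                (by rw [if_neg (by omega), if_neg (by omega)])] at hDc
          have hDi' : Des i (pi n t') := by
            unfold Des
            unfold Des at hNDj
            rw [Fin.lt_def]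
            rw [Fin.lt_def, not_lt] at hNDj
            rw [Fin.lt_def] at hD2
            have e1 := inv_val_congr (pi n t') (x := (j:ℕ)+1) (y := (i:ℕ)+2)
              (by omega) (by omega) (by omega)
            have e2 := inv_val_congr (pi n t') (x := (j:ℕ)) (y := (i:ℕ)+1)
              (by omega) (by omega) (by omega)
            have e3 := inv_val_ne (pi n t') (x := (i:ℕ)+1) (y := (i:ℕ)+2)
              (by omega) (by omega) (by omega)
            omega
          obtain ⟨m', hm'len, hm'pi, hm'red, hm'P⟩ := IH t' hlen' hred' i hDi'
          have hDj' : Des j (pi n m') := by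
            rw [hm'pi]
            unfold Des
            rw [inv_sw_val i _ ((j:ℕ)+1) (by omega) ((j:ℕ)+1) (by omega)
                (by rw [if_neg (by omega), if_neg (by omega)]),
              inv_sw_val i _ (j:ℕ) (by omega) (i:ℕ) (by omega)
                (by rw [if_neg (by omega), if_pos (by omega)] <;> omega)]
            rw [Fin.lt_def]
            rw [Fin.lt_def] at hD2
            have e1 := inv_val_congr (pi n t') (x := (j:ℕ)+1) (y := (i:ℕ)+2)
              (by omega) (by omega) (by omega)
            omega
          have hm'len2 : m'.length ≤ N := by omega
          obtain ⟨m'', hm''len, hm''pi, hm''red, hm''P⟩ := IH m' hm'len2 hm'red j hDj'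
          have hbr : sw n i * sw n j * sw n i = sw n j * sw n i * sw n j :=
            sw_braid hj1
          have hbru : NilCoxeter.u F n i * NilCoxeter.u F n j * NilCoxeter.u F n i
              = NilCoxeter.u F n j * NilCoxeter.u F n i * NilCoxeter.u F n j :=
            u_braid hj1
          have hpieq : pi n (j :: i :: m'') = sw n i * pi n (j :: t') := by
            rw [pi_cons, pi_cons, hm''pi, hm'pi, pi_cons]
            simp only [← mul_assoc]
            congr 1
            calc sw n j * sw n i * sw n j * sw n i
                = (sw n i * sw n j * sw n i) * sw n i := by rw [hbr]
              _ = sw n i * sw n j * (sw n i * sw n i) := by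
                  simp only [mul_assoc]
              _ = sw n i * sw n j := by rw [sw_mul_self, mul_one]
          refine ⟨j :: i :: m'', by simp; omega, hpieq, ?_, ?_⟩
          · have h2 := len_sw_of_des hD
            rw [hpieq, List.length_cons, List.length_cons]
            omega
          · rw [P_cons, hm'P, hm''P, P_cons, P_cons]
            simp only [← mul_assoc]
            rw [hbru]
        · by_cases hj2 : (i:ℕ) = (j:ℕ)+1
          · -- adjacent, i = j + 1
            have hD2 : ((pi n t')⁻¹ ⟨(i:ℕ)+1, by omega⟩ : Fin n)
                < (pi n t')⁻¹ ⟨(j:ℕ), by omega⟩ := by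
              unfold Des at hDc
              rwa [inv_sw_val j _ ((i:ℕ)+1) (by omega) ((i:ℕ)+1) (by omega)
                  (by rw [if_neg (by omega), if_neg (by omega)]),
                inv_sw_val j _ (i:ℕ) (by omega) (j:ℕ) (by omega)
                  (by rw [if_neg (by omega), if_pos (by omega)])] at hDc
            have hDi' : Des i (pi n t') := by
              unfold Des
              unfold Des at hNDj
              rw [Fin.lt_def]
              rw [Fin.lt_def, not_lt] at hNDj
              rw [Fin.lt_def] at hD2
              have e1 := inv_val_congr (pi n t') (x := (j:ℕ)+1) (y := (i:ℕ))
                (by omega) (by omega) (by omega)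
              have e2 := inv_val_ne (pi n t') (x := (i:ℕ)+1) (y := (i:ℕ))
                (by omega) (by omega) (by omega)
              omega
            obtain ⟨m', hm'len, hm'pi, hm'red, hm'P⟩ := IH t' hlen' hred' i hDi'
            have hDj' : Des j (pi n m') := by
              rw [hm'pi]
              unfold Des
              rw [inv_sw_val i _ ((j:ℕ)+1) (by omega) ((i:ℕ)+1) (by omega)
                  (by rw [if_pos (by omega)] <;> omega),
                inv_sw_val i _ (j:ℕ) (by omega) (j:ℕ) (by omega)
                  (by rw [if_neg (by omega), if_neg (by omega)])]
              rw [Fin.lt_def]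
              rw [Fin.lt_def] at hD2
              omega
            have hm'len2 : m'.length ≤ N := by omega
            obtain ⟨m'', hm''len, hm''pi, hm''red, hm''P⟩ :=
              IH m' hm'len2 hm'red j hDj'
            have hbr : sw n i * sw n j * sw n i = sw n j * sw n i * sw n j :=
              (sw_braid hj2).symm
            have hbru : NilCoxeter.u F n i * NilCoxeter.u F n j * NilCoxeter.u F n i
                = NilCoxeter.u F n j * NilCoxeter.u F n i * NilCoxeter.u F n j :=
              (u_braid hj2).symm
            have hpieq : pi n (j :: i :: m'') = sw n i * pi n (j :: t') := by
              rw [pi_cons, pi_cons, hm''pi, hm'pi, pi_cons]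
              simp only [← mul_assoc]
              congr 1
              calc sw n j * sw n i * sw n j * sw n i
                  = (sw n i * sw n j * sw n i) * sw n i := by rw [hbr]
                _ = sw n i * sw n j * (sw n i * sw n i) := by
                    simp only [mul_assoc]
                _ = sw n i * sw n j := by rw [sw_mul_self, mul_one]
            refine ⟨j :: i :: m'', by simp; omega, hpieq, ?_, ?_⟩
            · have h2 := len_sw_of_des hD
              rw [hpieq, List.length_cons, List.length_cons]
              omega
            · rw [P_cons, hm'P, hm''P, P_cons, P_cons]
              simp only [← mul_assoc]
              rw [hbru]
          · -- distant
            have hdist : (i:ℕ)+1 < (j:ℕ) ∨ (j:ℕ)+1 < (i:ℕ) := by omega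
            have hDi' : Des i (pi n t') := by
              unfold Des
              unfold Des at hDc
              rwa [inv_sw_val j _ ((i:ℕ)+1) (by omega) ((i:ℕ)+1) (by omega)
                  (by rw [if_neg (by omega), if_neg (by omega)]),
                inv_sw_val j _ (i:ℕ) (by omega) (i:ℕ) (by omega)
                  (by rw [if_neg (by omega), if_neg (by omega)])] at hDc
            obtain ⟨m', hm'len, hm'pi, hm'red, hm'P⟩ := IH t' hlen' hred' i hDi'
            have hpieq : pi n (j :: m') = sw n i * pi n (j :: t') := by
              rw [pi_cons, hm'pi, pi_cons, ← mul_assoc, ← mul_assoc,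
                sw_comm hdist]
            refine ⟨j :: m', by simp; omega, hpieq, ?_, ?_⟩
            · have h2 := len_sw_of_des hD
              rw [hpieq, List.length_cons]
              omega
            · rw [P_cons, hm'P, P_cons, ← mul_assoc, ← mul_assoc, u_comm hdist]

end NCX

namespace NCX

lemma claim (F : Type) [Field F] (n : ℕ) :
    ∀ l : List (Fin (n-1)), P F n l = 0 ∨ len (pi n l) = l.length := by
  intro l
  induction l with
  | nil => right; simp [len_one]
  | cons i t ih =>
    rcases ih with h0 | hred
    · left; rw [P_cons, h0, mul_zero]
    · by_cases hD : Des i (pi n t)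
      · left
        obtain ⟨m, _, _, _, hP⟩ := lemB F n t.length t le_rfl hred i hD
        rw [P_cons, hP, ← mul_assoc, u_sq, zero_mul]
      · right
        rw [pi_cons, len_sw_of_not_des hD, hred, List.length_cons]

end NCX

/-- In the nilcoxeter algebra `N_n`, any product of `k` generators with `k > n(n-1)/2`
is zero. -/
theorem stmt_7 (F : Type) [Field F] (n k : ℕ) (hk : n * (n - 1) / 2 < k)
    (f : Fin k → Fin (n - 1)) :
    (List.ofFn fun j => NilCoxeter.u F n (f j)).prod = 0 := by
  have hP : (List.ofFn fun j => NilCoxeter.u F n (f j)).prod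
      = NCX.P F n (List.ofFn f) := by
    rw [NCX.P, List.map_ofFn]; rfl
  rw [hP]
  rcases NCX.claim F n (List.ofFn f) with h | h
  · exact h
  · exfalso
    have h1 := NCX.len_le (NCX.pi n (List.ofFn f))
    rw [h, List.length_ofFn] at h1
    omega
end

section
/- The nilcoxeter algebra N_{n+1} is free of rank n+1 as a right module over the subalgebra N_n generated by u_1, ..., u_{n-1}, with basis 1, u_n, u_{n-1}u_n, ..., u_1 u_2 ⋯ u_n. -/
/-- The inclusion `N_n → N_{n+1}` sending each generator `u_i` to `u_i`. -/
noncomputable def NilCoxeter.incl (F : Type) [Field F] (n : ℕ) :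
    NilCoxeter F n →ₐ[F] NilCoxeter F (n + 1) :=
  RingQuot.liftAlgHom F
    ⟨FreeAlgebra.lift F
        (fun i => NilCoxeter.u F (n + 1) (Fin.castLE (Nat.sub_le n 1) i)), by
      rintro x y (⟨i⟩ | ⟨i, j, h⟩ | ⟨i, j, h⟩) <;>
        simp only [map_mul, map_zero, FreeAlgebra.lift_ι_apply]
      · have := RingQuot.mkAlgHom_rel F
          (NilCoxeterRel.sq (F := F) (n := n + 1) (Fin.castLE (Nat.sub_le n 1) i))
        simpa [NilCoxeter.u] using this
      · have := RingQuot.mkAlgHom_rel F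
          (NilCoxeterRel.comm (F := F) (n := n + 1) (Fin.castLE (Nat.sub_le n 1) i)
            (Fin.castLE (Nat.sub_le n 1) j) (by simpa using h))
        simpa [NilCoxeter.u] using this
      · have := RingQuot.mkAlgHom_rel F
          (NilCoxeterRel.braid (F := F) (n := n + 1) (Fin.castLE (Nat.sub_le n 1) i)
            (Fin.castLE (Nat.sub_le n 1) j) (by simpa using h))
        simpa [NilCoxeter.u] using this⟩

/-- `N_{n+1}` as a right `N_n`-module (i.e. a module over the opposite ring), via the
inclusion `N_n → N_{n+1}` and right multiplication. -/
noncomputable def NilCoxeter.rightModule (F : Type) [Field F] (n : ℕ) :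
    Module (NilCoxeter F n)ᵐᵒᵖ (NilCoxeter F (n + 1)) :=
  Module.compHom (NilCoxeter F (n + 1)) (RingHom.op (NilCoxeter.incl F n).toRingHom)

/-- The element `u_{n-k} u_{n-k+1} ⋯ u_{n-1}` of `N_{n+1}` (in 0-indexed notation), i.e.
the basis element `u_{n-k+1} ⋯ u_n` of the paper; for `k = 0` it is `1`. -/
noncomputable def NilCoxeter.basisElem (F : Type) [Field F] (n k : ℕ) :
    NilCoxeter F (n + 1) :=
  ((List.range' (n - k) k).map
    (fun j => if h : j < n then NilCoxeter.u F (n + 1) ⟨j, h⟩ else 0)).prod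

section
open MulOpposite
namespace NC
variable (F : Type) [Field F]

/-- total generator function -/
noncomputable def g (m : ℕ) (i : ℕ) : NilCoxeter F m :=
  if h : i < m - 1 then NilCoxeter.u F m ⟨i, h⟩ else 0

lemma g_sq (m i : ℕ) : g F m i * g F m i = 0 := by
  unfold g; split
  · have := RingQuot.mkAlgHom_rel F (NilCoxeterRel.sq (F := F) (n := m) ⟨i, by assumption⟩)
    simpa [NilCoxeter.u] using this
  · simp

lemma g_comm (m i j : ℕ) (h : i + 1 < j ∨ j + 1 < i) :
    g F m i * g F m j = g F m j * g F m i := by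
  unfold g; split <;> split <;> try simp
  have := RingQuot.mkAlgHom_rel F
    (NilCoxeterRel.comm (F := F) (n := m) ⟨i, by assumption⟩ ⟨j, by assumption⟩ (by simpa using h))
  simpa [NilCoxeter.u] using this

lemma g_braid (m i j : ℕ) (h : j = i + 1) :
    g F m i * g F m j * g F m i = g F m j * g F m i * g F m j := by
  unfold g; split <;> split <;> try simp
  have := RingQuot.mkAlgHom_rel F
    (NilCoxeterRel.braid (F := F) (n := m) ⟨i, by assumption⟩ ⟨j, by assumption⟩ (by simpa using h))
  simpa [NilCoxeter.u] using this

variable (n : ℕ)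

/-- `U i` : generators of `N_{n+1}` (zero out of range). -/
noncomputable abbrev U (i : ℕ) : NilCoxeter F (n+1) := g F (n+1) i
/-- `V i` : generators of `N_n` (zero out of range). -/
noncomputable abbrev V (i : ℕ) : NilCoxeter F n := g F n i

lemma U_lt_iff (i : ℕ) : i < (n+1) - 1 ↔ i < n := by omega

/-- the basis elements, recursively -/
noncomputable def bb : ℕ → NilCoxeter F (n+1)
  | 0 => 1
  | (k+1) => U F n (n-k-1) * bb k

lemma bb_dist (k : ℕ) (j : ℕ) (h : j + 1 < n - k) :
    U F n j * bb F n k = bb F n k * U F n j := by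
  induction k with
  | zero => simp [bb]
  | succ k ih =>
    rw [bb, ← mul_assoc, g_comm F (n+1) j (n-k-1) (by omega), mul_assoc,
      ih (by omega), mul_assoc]

lemma bb_comm (k : ℕ) (hk : k ≤ n) (j : ℕ) (hj : j < n) (h : n - k < j) :
    U F n j * bb F n k = bb F n k * U F n (j-1) := by
  induction k with
  | zero => omega
  | succ k ih =>
    rw [bb]
    rcases Nat.lt_or_ge (n - k) j with hcase | hcase
    · rw [← mul_assoc, g_comm F (n+1) j (n-k-1) (by omega), mul_assoc,
        ih (by omega) hcase, ← mul_assoc]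
    · -- j = n - k, and k ≥ 1
      have hjk : j = n - k := by omega
      obtain ⟨k', rfl⟩ : ∃ k', k = k' + 1 := ⟨k - 1, by omega⟩
      rw [bb]
      have e1 : n - k' - 1 = j := by omega
      have e0 : n - (k'+1) - 1 = j - 1 := by omega
      rw [e1, e0, ← mul_assoc, ← mul_assoc,
        ← g_braid F (n+1) (j-1) j (by omega),
        mul_assoc (U F n (j-1) * U F n j), bb_dist F n k' (j-1) (by omega),
        ← mul_assoc, mul_assoc (U F n (j-1))]

lemma bb_zero (k : ℕ) (j : ℕ) (hj : j < n) (h : n - k = j) (hk : 0 < k) :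
    U F n j * bb F n k = 0 := by
  obtain ⟨k', rfl⟩ : ∃ k', k = k' + 1 := ⟨k - 1, by omega⟩
  have e1 : n - k' - 1 = j := by omega
  rw [bb, e1, ← mul_assoc, g_sq, zero_mul]



lemma dite_eq_g (j : ℕ) :
    (if h : j < n then NilCoxeter.u F (n + 1) ⟨j, h⟩ else 0) = g F (n+1) j := by
  rw [g]
  by_cases h : j < n
  · rw [dif_pos h, dif_pos (show j < (n+1)-1 by omega)]
  · rw [dif_neg h, dif_neg (show ¬ j < (n+1)-1 by omega)]

lemma basisElem_eq_bb (k : ℕ) (hk : k ≤ n) : NilCoxeter.basisElem F n k = bb F n k := by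
  revert hk
  induction k with
  | zero => intro _; simp [NilCoxeter.basisElem, bb]
  | succ k ih =>
    intro hk
    have hr : List.range' (n - (k+1)) (k+1) = (n - k - 1) :: List.range' (n-k) k := by
      rw [← Nat.sub_sub, List.range', show n - k - 1 + 1 = n - k from by omega]
    rw [NilCoxeter.basisElem, hr, List.map_cons, List.prod_cons, bb, dite_eq_g]
    rw [show ((List.range' (n-k) k).map
      (fun j => if h : j < n then NilCoxeter.u F (n + 1) ⟨j, h⟩ else 0)).prod
        = NilCoxeter.basisElem F n k from rfl, ih (by omega)]


section Action

noncomputable def cmp (i : ℕ) (k : Fin (n+1)) :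
    (NilCoxeter F n)ᵐᵒᵖ →ₗ[(NilCoxeter F n)ᵐᵒᵖ] (Fin (n+1) →₀ (NilCoxeter F n)ᵐᵒᵖ) :=
  if _h1 : i + 1 + (k:ℕ) = n then Finsupp.lsingle ⟨(k:ℕ)+1, by omega⟩
  else if _h2 : i + (k:ℕ) = n then 0
  else if _h3 : n < i + (k:ℕ) then
    (Finsupp.lsingle k).comp (LinearMap.mulRight _ (op (V F n (i-1))))
  else (Finsupp.lsingle k).comp (LinearMap.mulRight _ (op (V F n i)))

noncomputable def TT (i : ℕ) :
    Module.End (NilCoxeter F n)ᵐᵒᵖ (Fin (n+1) →₀ (NilCoxeter F n)ᵐᵒᵖ) :=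
  Finsupp.lsum ℕ (cmp F n i)

variable {F n}
variable (i : ℕ) (k : Fin (n+1)) (x : (NilCoxeter F n)ᵐᵒᵖ)

lemma TT_single_1 (h : i + 1 + (k:ℕ) = n) :
    TT F n i (Finsupp.single k x) = Finsupp.single ⟨(k:ℕ)+1, by omega⟩ x := by
  rw [TT, Finsupp.lsum_single, cmp, dif_pos h, Finsupp.lsingle_apply]

lemma TT_single_2 (h : i + (k:ℕ) = n) :
    TT F n i (Finsupp.single k x) = 0 := by
  rw [TT, Finsupp.lsum_single, cmp, dif_neg (by omega), dif_pos h, LinearMap.zero_apply]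

lemma TT_single_3 (h : n < i + (k:ℕ)) :
    TT F n i (Finsupp.single k x) = Finsupp.single k (x * op (V F n (i-1))) := by
  rw [TT, Finsupp.lsum_single, cmp, dif_neg (by omega), dif_neg (by omega), dif_pos h]
  rfl

lemma TT_single_4 (h : i + 1 + (k:ℕ) < n) :
    TT F n i (Finsupp.single k x) = Finsupp.single k (x * op (V F n i)) := by
  rw [TT, Finsupp.lsum_single, cmp, dif_neg (by omega), dif_neg (by omega),
    dif_neg (by omega)]
  rfl


variable {i k x}

lemma TT_sq : TT F n i * TT F n i = 0 := by
  apply Finsupp.lhom_ext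
  intro k x
  have hk := k.isLt
  rw [Module.End.mul_apply, LinearMap.zero_apply]
  rcases Nat.lt_trichotomy (i + 1 + (k:ℕ)) n with h | h | h
  · rw [TT_single_4 i k x h, TT_single_4 i k (x * op (V F n i)) h, mul_assoc, ← op_mul, g_sq, op_zero,
      mul_zero, Finsupp.single_zero]
  · rw [TT_single_1 i k x h, TT_single_2 i _ x (by simp only [Fin.val_mk]; omega)]
  · rcases Nat.lt_trichotomy (i + (k:ℕ)) n with h2 | h2 | h2
    · omega
    · rw [TT_single_2 i k x h2, map_zero]
    · rw [TT_single_3 i k x h2, TT_single_3 i k (x * op (V F n (i-1))) h2, mul_assoc, ← op_mul, g_sq, op_zero,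
        mul_zero, Finsupp.single_zero]

lemma TT_single_1' (i : ℕ) (k k' : Fin (n+1)) (x : (NilCoxeter F n)ᵐᵒᵖ)
    (h : i + 1 + (k:ℕ) = n) (h' : (k':ℕ) = (k:ℕ)+1) :
    TT F n i (Finsupp.single k x) = Finsupp.single k' x := by
  rw [TT_single_1 i k x h]
  congr 1
  exact Fin.ext h'.symm

lemma TT_comm {i j : ℕ} (h : i + 1 < j) : TT F n i * TT F n j = TT F n j * TT F n i := by
  apply Finsupp.lhom_ext
  intro k x
  have hk := k.isLt
  rw [Module.End.mul_apply, Module.End.mul_apply]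
  by_cases hA : j + 1 + (k:ℕ) = n
  · obtain ⟨k1, hk1⟩ : ∃ k1 : Fin (n+1), (k1:ℕ) = (k:ℕ)+1 := ⟨⟨(k:ℕ)+1, by omega⟩, rfl⟩
    rw [TT_single_1' j k k1 x hA hk1, TT_single_4 i k1 x (by omega),
      TT_single_4 i k x (by omega), TT_single_1' j k k1 _ hA hk1]
  · by_cases hB : j + (k:ℕ) = n
    · rw [TT_single_2 j k x hB, map_zero, TT_single_4 i k x (by omega),
        TT_single_2 j k _ hB]
    · by_cases hC : n < j + (k:ℕ)
      · by_cases hC1 : i + 1 + (k:ℕ) = n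
        · obtain ⟨k1, hk1⟩ : ∃ k1 : Fin (n+1), (k1:ℕ) = (k:ℕ)+1 := ⟨⟨(k:ℕ)+1, by omega⟩, rfl⟩
          rw [TT_single_3 j k x hC, TT_single_1' i k k1 _ hC1 hk1,
            TT_single_1' i k k1 x hC1 hk1, TT_single_3 j k1 x (by omega)]
        · by_cases hC2 : i + (k:ℕ) = n
          · rw [TT_single_3 j k x hC, TT_single_2 i k _ hC2, TT_single_2 i k x hC2,
              map_zero]
          · by_cases hC3 : n < i + (k:ℕ)
            · rw [TT_single_3 j k x hC, TT_single_3 i k _ hC3, TT_single_3 i k x hC3,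
                TT_single_3 j k _ hC, mul_assoc, mul_assoc, ← op_mul, ← op_mul,
                g_comm F n (i-1) (j-1) (Or.inl (by omega))]
            · rw [TT_single_3 j k x hC, TT_single_4 i k _ (by omega),
                TT_single_4 i k x (by omega), TT_single_3 j k _ hC,
                mul_assoc, mul_assoc, ← op_mul, ← op_mul,
                g_comm F n i (j-1) (Or.inl (by omega))]
      · rw [TT_single_4 j k x (by omega), TT_single_4 i k _ (by omega),
          TT_single_4 i k x (by omega), TT_single_4 j k _ (by omega),
          mul_assoc, mul_assoc, ← op_mul, ← op_mul, g_comm F n i j (Or.inl h)]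

lemma TT_braid {i j : ℕ} (h : j = i + 1) :
    TT F n i * TT F n j * TT F n i = TT F n j * TT F n i * TT F n j := by
  apply Finsupp.lhom_ext
  intro k x
  have hk := k.isLt
  rw [Module.End.mul_apply, Module.End.mul_apply, Module.End.mul_apply, Module.End.mul_apply]
  by_cases hE3 : i + (k:ℕ) = n
  · rw [TT_single_2 i k x hE3, map_zero, map_zero, TT_single_3 j k x (by omega),
      TT_single_2 i k _ hE3, map_zero]
  · by_cases hE4 : n < i + (k:ℕ)
    · have hb : V F n (i-1) * (V F n (j-1) * V F n (i-1))
          = V F n (j-1) * (V F n (i-1) * V F n (j-1)) := by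
        rw [← mul_assoc, ← mul_assoc, g_braid F n (i-1) (j-1) (by omega)]
      rw [TT_single_3 i k x hE4, TT_single_3 j k _ (by omega),
        TT_single_3 i k _ hE4, TT_single_3 j k x (by omega),
        TT_single_3 i k _ hE4, TT_single_3 j k _ (by omega)]
      simp only [mul_assoc, ← op_mul, hb]
    · by_cases hE2 : i + 1 + (k:ℕ) = n
      · obtain ⟨k1, hk1⟩ : ∃ k1 : Fin (n+1), (k1:ℕ) = (k:ℕ)+1 := ⟨⟨(k:ℕ)+1, by omega⟩, rfl⟩
        rw [TT_single_1' i k k1 x hE2 hk1, TT_single_3 j k1 x (by omega),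
          TT_single_2 i k1 _ (by omega), TT_single_2 j k x (by omega),
          map_zero, map_zero]
      · by_cases hE1 : i + 2 + (k:ℕ) = n
        · obtain ⟨k1, hk1⟩ : ∃ k1 : Fin (n+1), (k1:ℕ) = (k:ℕ)+1 := ⟨⟨(k:ℕ)+1, by omega⟩, rfl⟩
          obtain ⟨k2, hk2⟩ : ∃ k2 : Fin (n+1), (k2:ℕ) = (k1:ℕ)+1 := ⟨⟨(k1:ℕ)+1, by omega⟩, rfl⟩
          rw [TT_single_4 i k x (by omega), TT_single_1' j k k1 _ (by omega) hk1,
            TT_single_1' i k1 k2 _ (by omega) hk2, TT_single_1' j k k1 x (by omega) hk1,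
            TT_single_1' i k1 k2 x (by omega) hk2, TT_single_3 j k2 x (by omega),
            show j - 1 = i from by omega]
        · -- i + 2 + k < n : all in case 4
          have hb : V F n i * (V F n j * V F n i) = V F n j * (V F n i * V F n j) := by
            rw [← mul_assoc, ← mul_assoc, g_braid F n i j h]
          rw [TT_single_4 i k x (by omega), TT_single_4 j k _ (by omega),
            TT_single_4 i k _ (by omega), TT_single_4 j k x (by omega),
            TT_single_4 i k _ (by omega), TT_single_4 j k _ (by omega)]
          simp only [mul_assoc, ← op_mul, hb]

variable (F n)

noncomputable def rho : NilCoxeter F (n+1) →ₐ[F]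
    Module.End (NilCoxeter F n)ᵐᵒᵖ (Fin (n+1) →₀ (NilCoxeter F n)ᵐᵒᵖ) :=
  RingQuot.liftAlgHom F
    ⟨FreeAlgebra.lift F (fun i : Fin ((n+1)-1) => TT F n (i:ℕ)), by
      rintro x y (⟨i⟩ | ⟨i, j, hij⟩ | ⟨i, j, hij⟩) <;>
        simp only [map_mul, map_zero, FreeAlgebra.lift_ι_apply]
      · exact TT_sq
      · rcases hij with h | h
        · exact TT_comm h
        · exact (TT_comm h).symm
      · exact TT_braid hij⟩

lemma rho_u (i : Fin ((n+1)-1)) :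
    rho F n (NilCoxeter.u F (n+1) i) = TT F n (i:ℕ) := by
  rw [rho, NilCoxeter.u, RingQuot.liftAlgHom_mkAlgHom_apply, FreeAlgebra.lift_ι_apply]

lemma rho_g (m : ℕ) (h : m < n) : rho F n (g F (n+1) m) = TT F n m := by
  rw [g, dif_pos (show m < (n+1)-1 by omega), rho_u]

end Action

end NC

namespace NC
attribute [local instance] NilCoxeter.rightModule
variable (F : Type) [Field F] (n : ℕ)

lemma incl_u (i : Fin (n-1)) :
    NilCoxeter.incl F n (NilCoxeter.u F n i)
      = NilCoxeter.u F (n+1) (Fin.castLE (Nat.sub_le n 1) i) := by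
  rw [NilCoxeter.incl, NilCoxeter.u, RingQuot.liftAlgHom_mkAlgHom_apply,
    FreeAlgebra.lift_ι_apply]

lemma incl_g (m : ℕ) (h : m < n - 1) :
    NilCoxeter.incl F n (g F n m) = g F (n+1) m := by
  rw [g, dif_pos h, incl_u, g, dif_pos (show m < (n+1)-1 by omega)]
  congr 1

lemma op_smul_def (a : (NilCoxeter F n)ᵐᵒᵖ) (x : NilCoxeter F (n+1)) :
    a • x = x * NilCoxeter.incl F n (unop a) := rfl

noncomputable def psi :
    (Fin (n+1) →₀ (NilCoxeter F n)ᵐᵒᵖ) →ₗ[(NilCoxeter F n)ᵐᵒᵖ] NilCoxeter F (n+1) :=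
  Finsupp.lsum ℕ (fun k : Fin (n+1) =>
    LinearMap.toSpanSingleton (NilCoxeter F n)ᵐᵒᵖ _ (bb F n (k:ℕ)))

lemma psi_single (k : Fin (n+1)) (x : (NilCoxeter F n)ᵐᵒᵖ) :
    psi F n (Finsupp.single k x) = bb F n (k:ℕ) * NilCoxeter.incl F n (unop x) := by
  rw [psi, Finsupp.lsum_single, LinearMap.toSpanSingleton_apply, op_smul_def]

end NC

namespace NC
attribute [local instance] NilCoxeter.rightModule
set_option synthInstance.maxHeartbeats 1000000
variable (F : Type) [Field F] (n : ℕ)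

lemma u_eq_g (m : ℕ) (i : Fin (m-1)) :
    NilCoxeter.u F m i = g F m (i:ℕ) := by
  rw [g, dif_pos i.isLt]

lemma mk_iota (m : ℕ) (i : Fin (m-1)) :
    RingQuot.mkAlgHom F (NilCoxeterRel F m) (FreeAlgebra.ι F i) = g F m (i:ℕ) := by
  rw [← NilCoxeter.u, u_eq_g]

lemma psi_Fsmul (r : F) (m : Fin (n+1) →₀ (NilCoxeter F n)ᵐᵒᵖ) :
    psi F n (r • m) = r • psi F n m := by
  induction m using Finsupp.induction_linear with
  | zero => simp
  | add f g hf hg => rw [smul_add, map_add, map_add, hf, hg, smul_add]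
  | single k x =>
      rw [Finsupp.smul_single, psi_single, psi_single, MulOpposite.unop_smul, map_smul,
        mul_smul_comm]

set_option synthInstance.maxHeartbeats 1000000 in
lemma key (w : NilCoxeter F (n+1)) (m : Fin (n+1) →₀ (NilCoxeter F n)ᵐᵒᵖ) :
    psi F n (rho F n w m) = w * psi F n m := by
  obtain ⟨p, rfl⟩ := RingQuot.mkAlgHom_surjective F (NilCoxeterRel F (n+1)) w
  revert m
  refine FreeAlgebra.induction F _ ?_ ?_ ?_ ?_ p
  · intro r m
    rw [AlgHom.commutes, AlgHom.commutes, Module.algebraMap_end_apply, psi_Fsmul,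
      Algebra.smul_def]
  · intro i m
    have hi : (i:ℕ) < n := by have := i.isLt; omega
    rw [mk_iota, rho_g F n _ hi]
    induction m using Finsupp.induction_linear with
    | zero => simp
    | add f g hf hg => rw [map_add, map_add, hf, hg, map_add, mul_add]
    | single k x =>
        have hk := k.isLt
        by_cases hA : (i:ℕ) + 1 + (k:ℕ) = n
        · obtain ⟨k1, hk1⟩ : ∃ k1 : Fin (n+1), (k1:ℕ) = (k:ℕ)+1 := ⟨⟨(k:ℕ)+1, by omega⟩, rfl⟩
          rw [TT_single_1' (i:ℕ) k k1 x hA hk1, psi_single, psi_single, hk1, bb,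
            show n - (k:ℕ) - 1 = (i:ℕ) from by omega, mul_assoc]
        · by_cases hB : (i:ℕ) + (k:ℕ) = n
          · rw [TT_single_2 (i:ℕ) k x hB, map_zero, psi_single, ← mul_assoc,
              bb_zero F n (k:ℕ) (i:ℕ) hi (by omega) (by omega), zero_mul]
          · by_cases hC : n < (i:ℕ) + (k:ℕ)
            · rw [TT_single_3 (i:ℕ) k x hC, psi_single, psi_single,
                MulOpposite.unop_mul, MulOpposite.unop_op, map_mul,
                incl_g F n ((i:ℕ)-1) (by omega), ← mul_assoc,
                ← bb_comm F n (k:ℕ) (by omega) (i:ℕ) hi (by omega), mul_assoc]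
            · rw [TT_single_4 (i:ℕ) k x (by omega), psi_single, psi_single,
                MulOpposite.unop_mul, MulOpposite.unop_op, map_mul,
                incl_g F n (i:ℕ) (by omega), ← mul_assoc,
                ← bb_dist F n (k:ℕ) (i:ℕ) (by omega), mul_assoc]
  · intro a b iha ihb m
    rw [map_mul, map_mul, Module.End.mul_apply, iha, ihb, mul_assoc]
  · intro a b iha ihb m
    rw [map_add (RingQuot.mkAlgHom F (NilCoxeterRel F (n+1))), map_add (rho F n),
      LinearMap.add_apply, map_add (psi F n), iha, ihb, add_mul]

set_option synthInstance.maxHeartbeats 1000000 in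
lemma rho_incl (a c : NilCoxeter F n) :
    rho F n (NilCoxeter.incl F n a) (Finsupp.single 0 (op c))
      = Finsupp.single 0 (op (a * c)) := by
  obtain ⟨p, rfl⟩ := RingQuot.mkAlgHom_surjective F (NilCoxeterRel F n) a
  revert c
  refine FreeAlgebra.induction F _ ?_ ?_ ?_ ?_ p
  · intro r c
    rw [AlgHom.commutes, AlgHom.commutes, AlgHom.commutes, Module.algebraMap_end_apply,
      Finsupp.smul_single]
    congr 1
  · intro i c
    have hi := i.isLt
    rw [mk_iota, g, dif_pos i.isLt, incl_u, rho_u,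
      TT_single_4 _ 0 (op c) (by simp only [Fin.coe_castLE, Fin.val_zero]; omega)]
    rw [← MulOpposite.op_mul]
    congr 2
    rw [u_eq_g]
    congr 1
  · intro a b iha ihb c
    rw [map_mul, map_mul, map_mul, Module.End.mul_apply, ihb, iha, mul_assoc]
  · intro a b iha ihb c
    rw [map_add (RingQuot.mkAlgHom F (NilCoxeterRel F n)), map_add (NilCoxeter.incl F n),
      map_add (rho F n), LinearMap.add_apply, iha, ihb, add_mul, MulOpposite.op_add,
      Finsupp.single_add]

lemma rho_incl_one (a : NilCoxeter F n) :
    rho F n (NilCoxeter.incl F n a) (Finsupp.single 0 1)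
      = Finsupp.single 0 (op a) := by
  rw [← MulOpposite.op_one, rho_incl, mul_one]

noncomputable def phi :
    NilCoxeter F (n+1) →ₗ[(NilCoxeter F n)ᵐᵒᵖ] (Fin (n+1) →₀ (NilCoxeter F n)ᵐᵒᵖ) where
  toFun w := rho F n w (Finsupp.single 0 1)
  map_add' a b := by rw [map_add (rho F n), LinearMap.add_apply]
  map_smul' a w := by
    rw [RingHom.id_apply, op_smul_def, map_mul, Module.End.mul_apply, rho_incl_one,
      ← map_smul (rho F n w), Finsupp.smul_single, smul_eq_mul, mul_one,
      MulOpposite.op_unop]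

lemma phi_apply (w : NilCoxeter F (n+1)) :
    phi F n w = rho F n w (Finsupp.single 0 1) := rfl

lemma rho_bb (k : ℕ) (hk : k ≤ n) (x : (NilCoxeter F n)ᵐᵒᵖ) :
    rho F n (bb F n k) (Finsupp.single 0 x) = Finsupp.single ⟨k, by omega⟩ x := by
  revert hk
  induction k with
  | zero =>
      intro _
      rw [bb, map_one, Module.End.one_apply]
      congr 1
  | succ k ih =>
      intro hk
      rw [bb, map_mul, Module.End.mul_apply, ih (by omega), rho_g F n (n-k-1) (by omega),
        TT_single_1' (n-k-1) ⟨k, by omega⟩ ⟨k+1, by omega⟩ x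
          (by simp only [Fin.val_mk]; omega) (by simp only [Fin.val_mk])]

lemma psi_phi (w : NilCoxeter F (n+1)) : psi F n (phi F n w) = w := by
  rw [phi_apply, key, psi_single, MulOpposite.unop_one, map_one, mul_one]
  show w * bb F n ((0 : Fin (n+1)) : ℕ) = w
  rw [Fin.val_zero, bb, mul_one]

lemma phi_psi (m : Fin (n+1) →₀ (NilCoxeter F n)ᵐᵒᵖ) : phi F n (psi F n m) = m := by
  induction m using Finsupp.induction_linear with
  | zero => simp
  | add f g hf hg => rw [map_add, map_add, hf, hg]
  | single k x =>
      have hk := k.isLt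
      rw [psi_single, phi_apply, map_mul, Module.End.mul_apply, rho_incl_one,
        MulOpposite.op_unop, rho_bb F n (k:ℕ) (by omega)]

noncomputable def equiv :
    NilCoxeter F (n+1) ≃ₗ[(NilCoxeter F n)ᵐᵒᵖ] (Fin (n+1) →₀ (NilCoxeter F n)ᵐᵒᵖ) :=
  LinearEquiv.ofLinear (phi F n) (psi F n)
    (by apply LinearMap.ext; intro m
        simp only [LinearMap.comp_apply, LinearMap.id_apply]; exact phi_psi F n m)
    (by apply LinearMap.ext; intro w
        simp only [LinearMap.comp_apply, LinearMap.id_apply]; exact psi_phi F n w)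

lemma basis_spec (k : Fin (n+1)) :
    (Module.Basis.ofRepr (equiv F n)) k = NilCoxeter.basisElem F n (k:ℕ) := by
  have h := Module.Basis.repr_symm_single_one (Module.Basis.ofRepr (equiv F n)) k
  rw [← h]
  show (equiv F n).symm (Finsupp.single k 1) = _
  rw [equiv, LinearEquiv.ofLinear_symm_apply, psi_single, MulOpposite.unop_one, map_one,
    mul_one, basisElem_eq_bb F n (k:ℕ) (by have := k.isLt; omega)]

end NC

end

/-- The nilcoxeter algebra `N_{n+1}` is free of rank `n+1` as a right module over the
subalgebra `N_n`, with basis `1, u_n, u_{n-1}u_n, ..., u_1 u_2 ⋯ u_n`. -/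
theorem stmt_11 (F : Type) [Field F] (n : ℕ) :
    letI := NilCoxeter.rightModule F n
    ∃ Bas : Module.Basis (Fin (n + 1)) (NilCoxeter F n)ᵐᵒᵖ (NilCoxeter F (n + 1)),
      ∀ k : Fin (n + 1), Bas k = NilCoxeter.basisElem F n k := by
  letI := NilCoxeter.rightModule F n
  exact ⟨Module.Basis.ofRepr (NC.equiv F n), fun k => NC.basis_spec F n k⟩
end
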